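/- arXiv:2303.02226 — 3 statements merged into one kernel-verified Lean document; each statement's English description precedes it below -/
import Mathlib

section
/- Let v and w be vectors in m-dimensional real Euclidean space with w ≠ 0, and suppose |⟨v, w⟩| > ⟨w, w⟩ / 2. Let c = nint(⟨v, w⟩ / ⟨w, w⟩) be the rounded projection coefficient. Then the Euclidean norm satisfies the strict inequality ‖v - c·w‖ < ‖v‖. -/
open scoped RealInnerProductSpace

/-- For `v w : ℝ^m` with `w ≠ 0` and `|⟪v, w⟫| > ⟪w, w⟫ / 2`, subtracting the
integer-rounded projection of `v` onto `w` strictly decreases the norm. -/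
theorem norm_sub_rounded_proj_lt {m : ℕ}
    (v w : EuclideanSpace ℝ (Fin m)) (hw : w ≠ 0)
    (hvw : ⟪w, w⟫ / 2 < |⟪v, w⟫|)
    (c : ℤ) (hc : c = round (⟪v, w⟫ / ⟪w, w⟫)) :
    ‖v - (c : ℝ) • w‖ < ‖v‖ := by
  set W := (⟪w, w⟫ : ℝ) with hWdef
  have hW : (0:ℝ) < W := by
    rw [hWdef, real_inner_self_eq_norm_sq]
    have h : ‖w‖ ≠ 0 := norm_ne_zero_iff.mpr hw
    positivity
  set a := (⟪v, w⟫ : ℝ) with hadef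
  set t : ℝ := a / W with htdef
  have ha : a = t * W := by rw [htdef, div_mul_cancel₀ a hW.ne']
  have hnorm : ‖v - (c:ℝ) • w‖ ^ 2 = ‖v‖ ^ 2 - 2*(c:ℝ)*a + (c:ℝ)^2*W := by
    have h1 : ‖v - (c:ℝ) • w‖ ^ 2 = ⟪v - (c:ℝ) • w, v - (c:ℝ) • w⟫ :=
      (real_inner_self_eq_norm_sq _).symm
    have h2 : ‖v‖ ^ 2 = ⟪v, v⟫ := (real_inner_self_eq_norm_sq _).symm
    have hcomm : (⟪w, v⟫:ℝ) = a := by rw [hadef]; exact real_inner_comm v w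
    rw [h1, h2]
    simp only [inner_sub_left, inner_sub_right, real_inner_smul_left,
      real_inner_smul_right, ← hWdef, ← hadef, hcomm]
    ring
  have hround : |t - (c:ℝ)| ≤ 1/2 := by
    rw [hc]; exact abs_sub_round t
  have ht : 1/2 < |t| := by
    rw [htdef, abs_div, abs_of_pos hW, lt_div_iff₀ hW]
    linarith
  have hsq1 : (t - (c:ℝ))^2 ≤ (1/2)^2 := by
    rw [← sq_abs]; exact pow_le_pow_left₀ (abs_nonneg _) hround 2
  have hsq2 : (1/2:ℝ)^2 < t^2 := by
    rw [← sq_abs t]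
    exact pow_lt_pow_left₀ ht (by norm_num) two_ne_zero
  have key : ‖v - (c:ℝ) • w‖ ^ 2 < ‖v‖ ^ 2 := by
    rw [hnorm, ha]; nlinarith [hW, hsq1, hsq2]
  have h0 : 0 ≤ ‖v - (c:ℝ) • w‖ := norm_nonneg _
  nlinarith [key, h0, norm_nonneg v]
end

section
/- Let a_1, …, a_n be vectors in m-dimensional real Euclidean space, let k be an index with a_k ≠ 0, and define the rounded projection coefficients c_j = nint(⟨a_j, a_k⟩ / ⟨a_k, a_k⟩) for j ≠ k and c_k = 0. Then for every real exponent p > 0, the sum of the p-th powers of the Euclidean norms does not increase: Σ_{j=1}^n ‖a_j - c_j·a_k‖^p ≤ Σ_{j=1}^n ‖a_j‖^p. -/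
open scoped RealInnerProductSpace

lemma norm_sub_round_smul_le {m : ℕ} (x y : EuclideanSpace ℝ (Fin m)) (hy : y ≠ 0) :
    ‖x - (round (⟪x, y⟫ / ⟪y, y⟫) : ℝ) • y‖ ≤ ‖x‖ := by
  set t : ℝ := ⟪x, y⟫ / ⟪y, y⟫ with ht
  set r : ℝ := (round t : ℝ) with hr
  have hyn : (0:ℝ) < ‖y‖ := norm_pos_iff.mpr hy
  have hyy : ⟪y, y⟫ = ‖y‖^2 := real_inner_self_eq_norm_sq y
  have hy2 : (0:ℝ) < ⟪y, y⟫ := by rw [hyy]; positivity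
  have hxy : ⟪x, y⟫ = t * ⟪y, y⟫ := by
    rw [ht, div_mul_cancel₀ _ hy2.ne']
  have hkey : (r - t)^2 ≤ t^2 := by
    rcases eq_or_ne (round t) 0 with h0 | h0
    · simp [hr, h0, sq_abs]
    · have h1 : (1:ℝ) ≤ |r| := by
        rw [hr, ← Int.cast_abs]
        exact_mod_cast Int.one_le_abs h0
      have h2 : |r - t| ≤ 1/2 := by
        rw [abs_sub_comm]; exact abs_sub_round t
      have h3 : |r| - 1/2 ≤ |t| := by
        have := abs_sub_abs_le_abs_sub r t
        linarith
      have : |r - t| ≤ |t| := by linarith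
      calc (r - t)^2 = |r - t|^2 := (sq_abs _).symm
        _ ≤ |t|^2 := by nlinarith [abs_nonneg (r - t)]
        _ = t^2 := sq_abs _
  have hsq : ‖x - r • y‖^2 ≤ ‖x‖^2 := by
    have hexp : ‖x - r • y‖^2 = ‖x‖^2 - 2 * ⟪x, r • y⟫ + ‖r • y‖^2 := by
      rw [@norm_sub_sq_real]
    have hin : ⟪x, r • y⟫ = r * ⟪x, y⟫ := real_inner_smul_right x y r
    have hny : ‖r • y‖^2 = r^2 * ⟪y, y⟫ := by
      rw [norm_smul, mul_pow, hyy, Real.norm_eq_abs, sq_abs]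
    rw [hexp, hin, hny, hxy]
    nlinarith [hkey, hy2]
  nlinarith [norm_nonneg (x - r • y), norm_nonneg x, hsq]

/-- Let `a 1, …, a n` be vectors in `ℝ^m`, let `k` be an index with `a k ≠ 0`,
and let `c j = nint (⟪a j, a k⟫ / ⟪a k, a k⟫)` for `j ≠ k` and `c k = 0`.
Then for every real exponent `p > 0`, the sum of the `p`-th powers of the
Euclidean norms does not increase. -/
theorem sum_rpow_norm_sub_rounded_proj_le {m n : ℕ}
    (a : Fin n → EuclideanSpace ℝ (Fin m)) (k : Fin n) (hk : a k ≠ 0)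
    (c : Fin n → ℤ)
    (hc : ∀ j, c j = if j = k then 0 else round (⟪a j, a k⟫ / ⟪a k, a k⟫))
    (p : ℝ) (hp : 0 < p) :
    ∑ j, ‖a j - (c j : ℝ) • a k‖ ^ p ≤ ∑ j, ‖a j‖ ^ p := by
  apply Finset.sum_le_sum
  intro j _
  apply Real.rpow_le_rpow (norm_nonneg _) _ hp.le
  rw [hc j]
  by_cases h : j = k
  · simp [h]
  · simp only [h, if_false]
    exact norm_sub_round_smul_le (a j) (a k) hk
end

section
/- Let a_1, …, a_n be vectors in m-dimensional real Euclidean space, let k be an index with a_k ≠ 0, and define the rounded projection coefficients c_j = nint(⟨a_j, a_k⟩ / ⟨a_k, a_k⟩) for j ≠ k and c_k = 0. Then the maximum of the squared Euclidean norms does not increase: max_{1 ≤ j ≤ n} ‖a_j - c_j·a_k‖^2 ≤ max_{1 ≤ j ≤ n} ‖a_j‖^2. -/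
open scoped RealInnerProductSpace

lemma abs_round_sub_le_abs (t : ℝ) : |(round t : ℝ) - t| ≤ |t| := by
  by_cases h : |t| < 1 / 2
  · have : round t = 0 := by
      rw [round_eq_zero_iff]
      constructor
      · linarith [abs_lt.mp h |>.1]
      · linarith [abs_lt.mp h |>.2]
    simp [this, abs_neg]
  · have := abs_sub_round t
    rw [abs_sub_comm] at this
    linarith [not_lt.mp h]

/-- Let `a 1, …, a n` be vectors in `ℝ^m`, let `k` be an index with `a k ≠ 0`,
and let `c j = nint (⟪a j, a k⟫ / ⟪a k, a k⟫)` for `j ≠ k` and `c k = 0`.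
Then the maximum of the squared Euclidean norms does not increase. -/
theorem max_sq_norm_sub_rounded_proj_le {m n : ℕ}
    (a : Fin n → EuclideanSpace ℝ (Fin m)) (k : Fin n) (hk : a k ≠ 0)
    (c : Fin n → ℤ)
    (hc : ∀ j, c j = if j = k then 0 else round (⟪a j, a k⟫ / ⟪a k, a k⟫)) :
    Finset.univ.sup' ⟨k, Finset.mem_univ k⟩
        (fun j => ‖a j - (c j : ℝ) • a k‖ ^ 2) ≤
      Finset.univ.sup' ⟨k, Finset.mem_univ k⟩ (fun j => ‖a j‖ ^ 2) := by
  apply Finset.sup'_le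
  intro j _
  have hj : ‖a j - (c j : ℝ) • a k‖ ^ 2 ≤ ‖a j‖ ^ 2 := by
    by_cases hjk : j = k
    · subst hjk; rw [hc j, if_pos rfl]; simp
    · have hak : (0:ℝ) < ⟪a k, a k⟫ := by
        rw [real_inner_self_eq_norm_sq]
        have := norm_pos_iff.mpr hk
        positivity
      set t : ℝ := ⟪a j, a k⟫ / ⟪a k, a k⟫ with ht
      have hcj : (c j : ℝ) = (round t : ℝ) := by rw [hc j, if_neg hjk]
      set r : ℝ := (c j : ℝ)
      have hipr : ⟪a j, a k⟫ = t * ⟪a k, a k⟫ := by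
        rw [ht, div_mul_cancel₀ _ (ne_of_gt hak)]
      have habs : |r - t| ≤ |t| := hcj ▸ abs_round_sub_le_abs t
      have h2 : (r - t) ^ 2 ≤ t ^ 2 := by
        nlinarith [sq_abs (r - t), sq_abs t,
          mul_self_le_mul_self (abs_nonneg (r - t)) habs]
      have hkey : r ^ 2 ≤ 2 * r * t := by nlinarith [h2]
      have expand : ‖a j - r • a k‖ ^ 2 =
          ‖a j‖ ^ 2 - 2 * r * ⟪a j, a k⟫ + r ^ 2 * ⟪a k, a k⟫ := by
        rw [@norm_sub_sq_real, real_inner_smul_right, norm_smul, real_inner_self_eq_norm_sq]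
        simp [mul_pow]
        ring
      rw [expand, hipr]
      nlinarith [hak, hkey]
  calc ‖a j - (c j : ℝ) • a k‖ ^ 2 ≤ ‖a j‖ ^ 2 := hj
    _ ≤ _ := Finset.le_sup' (fun i => ‖a i‖ ^ 2) (Finset.mem_univ j)
end
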